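/- Let D be a bounded open subset of ℂ, A a nonempty closed subset of the closure of D, and f : ℂ → ℝ a continuous function with compact support contained in D. If both limits L₁ := lim_{γ→0⁺} (𝔐_A(F_γ), f) and L₂ := lim_{r→0⁺} (𝔐_A(𝒥_r), f) exist, then L₁ = (1/2)·L₂. -/

import Mathlib

open MeasureTheory Filter

/-- `(𝔐_A(F), f) = ∫_{D∖A} f(z)·F(dist(z,A)) dz`, with respect to Lebesgue measure on ℂ. -/
noncomputable def Mint (D A : Set ℂ) (F : ℝ → ℝ) (f : ℂ → ℝ) : ℝ :=
  ∫ z in D \ A, f z * F (Metric.infDist z A)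

/-- `𝒥_r(s) = |log r|^{1/2} · 1_{(0,r)}(s)` -/
noncomputable def Jfun (r s : ℝ) : ℝ :=
  if s ∈ Set.Ioo 0 r then Real.sqrt |Real.log r| else 0

/-- `F_γ(s) = (γ/√(2π)) · 1_{(0,1)}(s) · |log s| · s^{γ²/2}` -/
noncomputable def Ffun (γ s : ℝ) : ℝ :=
  if s ∈ Set.Ioo (0:ℝ) 1 then γ / Real.sqrt (2 * Real.pi) * |Real.log s| * s ^ (γ ^ 2 / 2) else 0

/-- Auxiliary kernel: `v_γ(t) = (γ/√(2π)) e^{-γ²t/2}(1-γ²t/2)/√t`. -/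
noncomputable def vker (γ t : ℝ) : ℝ :=
  γ / Real.sqrt (2 * Real.pi) *
    (Real.exp (-(γ ^ 2 / 2 * t)) * (1 - γ ^ 2 / 2 * t)) / Real.sqrt t

lemma vker_measurable (γ : ℝ) : Measurable (vker γ) := by
  unfold vker; fun_prop

lemma vker_eq {γ : ℝ} {t : ℝ} (ht : 0 < t) :
    vker γ t = γ / Real.sqrt (2 * Real.pi) *
        (t ^ (-(1:ℝ)/2) * Real.exp (-(γ ^ 2 / 2 * t)))
      - γ / Real.sqrt (2 * Real.pi) * (γ ^ 2 / 2) *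
        (t ^ ((1:ℝ)/2) * Real.exp (-(γ ^ 2 / 2 * t))) := by
  have hst : Real.sqrt t ≠ 0 := ne_of_gt (Real.sqrt_pos.mpr ht)
  have h1 : t ^ ((1:ℝ)/2) = Real.sqrt t := (Real.sqrt_eq_rpow t).symm
  have h2 : t ^ (-(1:ℝ)/2) = (Real.sqrt t)⁻¹ := by
    rw [show (-(1:ℝ)/2) = -((1:ℝ)/2) by norm_num, Real.rpow_neg ht.le, h1]
  have hmul : Real.sqrt t * Real.sqrt t = t := Real.mul_self_sqrt ht.le
  have hinv : (Real.sqrt t)⁻¹ * Real.sqrt t = 1 := inv_mul_cancel₀ hst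
  rw [vker, h1, h2, div_eq_iff hst]
  linear_combination (-(γ / Real.sqrt (2*Real.pi) * Real.exp (-(γ^2/2*t)))) * hinv
    + (γ / Real.sqrt (2*Real.pi) * (γ^2/2) * Real.exp (-(γ^2/2*t))) * hmul

lemma integrableOn_rpow_exp {s b : ℝ} (hs : -1 < s) (hb : 0 < b) :
    IntegrableOn (fun t : ℝ => t ^ s * Real.exp (-(b * t))) (Set.Ioi 0) := by
  have h := integrableOn_rpow_mul_exp_neg_mul_rpow hs zero_lt_one hb
  refine h.congr_fun (fun t _ => ?_) measurableSet_Ioi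
  beta_reduce; rw [Real.rpow_one, neg_mul]

lemma Gi1 {b : ℝ} (hb : 0 < b) :
    ∫ t in Set.Ioi (0:ℝ), t ^ (-(1:ℝ)/2) * Real.exp (-(b*t))
      = Real.sqrt Real.pi / Real.sqrt b := by
  have h := Real.integral_rpow_mul_exp_neg_mul_Ioi (by norm_num : (0:ℝ) < 1/2) hb
  rw [show (1:ℝ)/2 - 1 = -(1:ℝ)/2 by norm_num] at h
  rw [h, Real.Gamma_one_half_eq, ← Real.sqrt_eq_rpow, one_div, Real.sqrt_inv]
  ring

lemma Gi2 {b : ℝ} (hb : 0 < b) :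
    ∫ t in Set.Ioi (0:ℝ), t ^ ((1:ℝ)/2) * Real.exp (-(b*t))
      = Real.sqrt Real.pi / (2 * b * Real.sqrt b) := by
  have h := Real.integral_rpow_mul_exp_neg_mul_Ioi (by norm_num : (0:ℝ) < 3/2) hb
  rw [show (3:ℝ)/2 - 1 = (1:ℝ)/2 by norm_num] at h
  have hG : Real.Gamma (3/2 : ℝ) = Real.sqrt Real.pi / 2 := by
    have h' := Real.Gamma_add_one (by norm_num : (1/2:ℝ) ≠ 0)
    rw [show (1/2:ℝ)+1 = 3/2 by norm_num] at h'
    rw [h', Real.Gamma_one_half_eq]; ring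
  have hb' : Real.sqrt b ≠ 0 := ne_of_gt (Real.sqrt_pos.mpr hb)
  have hpow : ((1:ℝ)/b) ^ ((3:ℝ)/2) = 1/(b * Real.sqrt b) := by
    rw [show (3:ℝ)/2 = 1 + 1/2 by norm_num, Real.rpow_add (by positivity),
      Real.rpow_one, ← Real.sqrt_eq_rpow, one_div, Real.sqrt_inv]
    field_simp
  rw [h, hG, hpow]
  field_simp

lemma c_sqrt {γ : ℝ} (hγ : 0 < γ) :
    γ / Real.sqrt (2*Real.pi) * (Real.sqrt Real.pi / Real.sqrt (γ^2/2)) = 1 := by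
  have h2π : Real.sqrt (2*Real.pi) = Real.sqrt 2 * Real.sqrt Real.pi :=
    Real.sqrt_mul (by norm_num) _
  have hs : Real.sqrt (γ^2/2) = γ / Real.sqrt 2 := by
    rw [show γ^2/2 = (γ/Real.sqrt 2)^2 by
      rw [div_pow, Real.sq_sqrt (by norm_num : (0:ℝ) ≤ 2)],
      Real.sqrt_sq (by positivity)]
  have hπ : Real.sqrt Real.pi ≠ 0 := ne_of_gt (Real.sqrt_pos.mpr Real.pi_pos)
  have h2 : Real.sqrt 2 ≠ 0 := by positivity
  rw [h2π, hs]
  field_simp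

lemma vker_pieces_int {γ : ℝ} (hγ : 0 < γ) :
    IntegrableOn (fun t : ℝ => t ^ (-(1:ℝ)/2) * Real.exp (-(γ^2/2 * t))) (Set.Ioi 0)
    ∧ IntegrableOn (fun t : ℝ => t ^ ((1:ℝ)/2) * Real.exp (-(γ^2/2 * t))) (Set.Ioi 0) := by
  have ha : 0 < γ^2/2 := by positivity
  exact ⟨integrableOn_rpow_exp (by norm_num) ha, integrableOn_rpow_exp (by norm_num) ha⟩

lemma vker_integrableOn {γ : ℝ} (hγ : 0 < γ) : IntegrableOn (vker γ) (Set.Ioi 0) := by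
  obtain ⟨h1, h2⟩ := vker_pieces_int hγ
  have hsub : IntegrableOn (fun t : ℝ =>
      γ / Real.sqrt (2*Real.pi) * (t ^ (-(1:ℝ)/2) * Real.exp (-(γ ^ 2 / 2 * t)))
      - γ / Real.sqrt (2*Real.pi) * (γ ^ 2 / 2) *
        (t ^ ((1:ℝ)/2) * Real.exp (-(γ ^ 2 / 2 * t)))) (Set.Ioi 0) :=
    (h1.const_mul (γ / Real.sqrt (2*Real.pi))).sub
      (h2.const_mul (γ / Real.sqrt (2*Real.pi) * (γ^2/2)))
  exact hsub.congr_fun (fun t ht => (vker_eq ht).symm) measurableSet_Ioi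

lemma vker_integral {γ : ℝ} (hγ : 0 < γ) :
    ∫ t in Set.Ioi (0:ℝ), vker γ t = 1/2 := by
  obtain ⟨h1, h2⟩ := vker_pieces_int hγ
  have ha : 0 < γ^2/2 := by positivity
  have ha' : Real.sqrt (γ^2/2) ≠ 0 := ne_of_gt (Real.sqrt_pos.mpr ha)
  rw [setIntegral_congr_fun measurableSet_Ioi (fun t (ht : 0 < t) => vker_eq ht),
    integral_sub (h1.const_mul _) (h2.const_mul _),
    MeasureTheory.integral_const_mul, MeasureTheory.integral_const_mul,
    Gi1 ha, Gi2 ha]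
  have hc := c_sqrt hγ
  have hterm2 : γ / Real.sqrt (2*Real.pi) * (γ^2/2) *
      (Real.sqrt Real.pi / (2 * (γ^2/2) * Real.sqrt (γ^2/2)))
      = (γ / Real.sqrt (2*Real.pi) * (Real.sqrt Real.pi / Real.sqrt (γ^2/2))) / 2 := by
    field_simp
  rw [hterm2, hc]
  norm_num

lemma vker_abs_le {γ : ℝ} (hγ : 0 < γ) {t : ℝ} (ht : 0 < t) :
    |vker γ t| ≤ γ / Real.sqrt (2*Real.pi) *
        (t ^ (-(1:ℝ)/2) * Real.exp (-(γ ^ 2 / 2 * t)))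
      + γ / Real.sqrt (2*Real.pi) * (γ^2/2) *
        (t ^ ((1:ℝ)/2) * Real.exp (-(γ ^ 2 / 2 * t))) := by
  rw [vker_eq ht]
  refine (abs_sub _ _).trans ?_
  have hA : 0 ≤ γ / Real.sqrt (2*Real.pi) *
      (t ^ (-(1:ℝ)/2) * Real.exp (-(γ ^ 2 / 2 * t))) := by positivity
  have hB : 0 ≤ γ / Real.sqrt (2*Real.pi) * (γ^2/2) *
      (t ^ ((1:ℝ)/2) * Real.exp (-(γ ^ 2 / 2 * t))) := by positivity
  rw [abs_of_nonneg hA, abs_of_nonneg hB]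

lemma vker_abs_integral {γ : ℝ} (hγ : 0 < γ) :
    ∫ t in Set.Ioi (0:ℝ), |vker γ t| ≤ 3/2 := by
  obtain ⟨h1, h2⟩ := vker_pieces_int hγ
  have ha : 0 < γ^2/2 := by positivity
  have ha' : Real.sqrt (γ^2/2) ≠ 0 := ne_of_gt (Real.sqrt_pos.mpr ha)
  have hsum : IntegrableOn (fun t : ℝ =>
      γ / Real.sqrt (2*Real.pi) * (t ^ (-(1:ℝ)/2) * Real.exp (-(γ ^ 2 / 2 * t)))
      + γ / Real.sqrt (2*Real.pi) * (γ ^ 2 / 2) *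
        (t ^ ((1:ℝ)/2) * Real.exp (-(γ ^ 2 / 2 * t)))) (Set.Ioi 0) :=
    (h1.const_mul (γ / Real.sqrt (2*Real.pi))).add
      (h2.const_mul (γ / Real.sqrt (2*Real.pi) * (γ^2/2)))
  have hmono := setIntegral_mono_on (vker_integrableOn hγ).abs hsum
    measurableSet_Ioi (fun t (ht : 0 < t) => vker_abs_le hγ ht)
  refine hmono.trans ?_
  rw [integral_add (h1.const_mul _) (h2.const_mul _),
    MeasureTheory.integral_const_mul, MeasureTheory.integral_const_mul,
    Gi1 ha, Gi2 ha]
  have hc := c_sqrt hγ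
  have hterm2 : γ / Real.sqrt (2*Real.pi) * (γ^2/2) *
      (Real.sqrt Real.pi / (2 * (γ^2/2) * Real.sqrt (γ^2/2)))
      = (γ / Real.sqrt (2*Real.pi) * (Real.sqrt Real.pi / Real.sqrt (γ^2/2))) / 2 := by
    field_simp
  rw [hterm2, hc]
  norm_num

/-- `vker γ t * √t = c·e^{-at}(1-at)` for `t > 0`. -/
lemma vker_mul_sqrt {γ t : ℝ} (ht : 0 < t) :
    vker γ t * Real.sqrt t
      = γ / Real.sqrt (2*Real.pi) * (Real.exp (-(γ ^ 2 / 2 * t)) * (1 - γ ^ 2 / 2 * t)) := by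
  have hst : Real.sqrt t ≠ 0 := ne_of_gt (Real.sqrt_pos.mpr ht)
  rw [vker]
  field_simp

lemma vker_abs_mul_sqrt_le {γ t : ℝ} (hγ : 0 < γ) (ht : 0 < t) :
    |vker γ t| * Real.sqrt t
      ≤ γ / Real.sqrt (2*Real.pi) * Real.exp (-(γ ^ 2 / 2 * t))
        + γ / Real.sqrt (2*Real.pi) * (γ^2/2) * (t * Real.exp (-(γ ^ 2 / 2 * t))) := by
  have h1 : |vker γ t| * Real.sqrt t = |vker γ t * Real.sqrt t| := by
    rw [abs_mul, abs_of_nonneg (Real.sqrt_nonneg t)]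
  rw [h1, vker_mul_sqrt ht]
  have hc : 0 ≤ γ / Real.sqrt (2*Real.pi) := by positivity
  have he : 0 < Real.exp (-(γ ^ 2 / 2 * t)) := Real.exp_pos _
  have habs : |1 - γ ^ 2 / 2 * t| ≤ 1 + γ^2/2 * t := by
    have h0 : 0 ≤ γ^2/2 * t := by positivity
    rw [abs_sub_comm]
    refine (abs_sub _ _).trans ?_
    rw [abs_of_nonneg h0, abs_of_nonneg (by norm_num : (0:ℝ) ≤ 1)]
    linarith
  calc |γ / Real.sqrt (2*Real.pi) * (Real.exp (-(γ ^ 2 / 2 * t)) * (1 - γ ^ 2 / 2 * t))|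
      = γ / Real.sqrt (2*Real.pi) * (Real.exp (-(γ ^ 2 / 2 * t)) * |1 - γ ^ 2 / 2 * t|) := by
        rw [abs_mul, abs_mul, abs_of_nonneg hc, abs_of_nonneg he.le]
    _ ≤ γ / Real.sqrt (2*Real.pi) * (Real.exp (-(γ ^ 2 / 2 * t)) * (1 + γ^2/2 * t)) := by
        refine mul_le_mul_of_nonneg_left (mul_le_mul_of_nonneg_left habs he.le) hc
    _ = γ / Real.sqrt (2*Real.pi) * Real.exp (-(γ ^ 2 / 2 * t))
        + γ / Real.sqrt (2*Real.pi) * (γ^2/2) * (t * Real.exp (-(γ ^ 2 / 2 * t))) := by ring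

/-- bound on `Jfun`. -/
lemma Jfun_abs_le (r s : ℝ) : |Jfun r s| ≤ Real.sqrt |Real.log r| := by
  rw [Jfun]
  split_ifs
  · rw [abs_of_nonneg (Real.sqrt_nonneg _)]
  · simpa using Real.sqrt_nonneg |Real.log r|

/-- The pointwise identity `∫₀^∞ v_γ(t)·𝒥_{e^{-t}}(s) dt = F_γ(s)`. -/
lemma keyA {γ : ℝ} (hγ : 0 < γ) (s : ℝ) :
    ∫ t in Set.Ioi (0:ℝ), vker γ t * Jfun (Real.exp (-t)) s = Ffun γ s := by
  by_cases hs : s ∈ Set.Ioo (0:ℝ) 1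
  · obtain ⟨hs0, hs1⟩ := hs
    set a := γ^2/2 with hadef
    set c := γ / Real.sqrt (2*Real.pi) with hcdef
    set T := -Real.log s with hTdef
    have hT : 0 < T := by
      have := Real.log_neg hs0 hs1
      simp only [hTdef]; linarith
    have heq : ∀ t ∈ Set.Ioi (0:ℝ), vker γ t * Jfun (Real.exp (-t)) s
        = Set.indicator (Set.Ioo (0:ℝ) T)
            (fun u => c * (Real.exp (-(a*u)) * (1 - a*u))) t := by
      intro t ht
      have ht0 : (0:ℝ) < t := ht
      have hlog : |Real.log (Real.exp (-t))| = t := by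
        rw [Real.log_exp, abs_neg, abs_of_pos ht0]
      have hcond : (s ∈ Set.Ioo 0 (Real.exp (-t))) ↔ t < T := by
        simp only [Set.mem_Ioo, hs0, true_and]
        rw [← Real.log_lt_iff_lt_exp hs0]
        have hTT : T = -Real.log s := hTdef
        constructor
        · intro h; linarith [h]
        · intro h; linarith [h]
      by_cases hlt : t < T
      · rw [Set.indicator_of_mem (Set.mem_Ioo.mpr ⟨ht0, hlt⟩), Jfun, if_pos (hcond.mpr hlt), hlog]
        exact vker_mul_sqrt ht0
      · rw [Set.indicator_of_notMem (fun h => hlt (Set.mem_Ioo.mp h).2), Jfun,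
          if_neg (fun h => hlt (hcond.mp h)), mul_zero]
    rw [setIntegral_congr_fun measurableSet_Ioi heq,
      setIntegral_indicator measurableSet_Ioo,
      Set.inter_eq_self_of_subset_right Set.Ioo_subset_Ioi_self]
    have hderiv : ∀ x ∈ Set.uIcc (0:ℝ) T,
        HasDerivAt (fun u => c * (u * Real.exp (-(a*u))))
          (c * (Real.exp (-(a*x)) * (1 - a*x))) x := by
      intro x _
      have h1 : HasDerivAt (fun u : ℝ => -(a*u)) (-a) x := by
        simpa using ((hasDerivAt_id x).const_mul a).fun_neg
      have h2 : HasDerivAt (fun u : ℝ => Real.exp (-(a*u)))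
          (Real.exp (-(a*x)) * (-a)) x := (Real.hasDerivAt_exp _).comp x h1
      have h3 := (hasDerivAt_id x).mul h2
      have h4 := h3.const_mul c
      exact h4.congr_deriv (by simp only [id_eq]; ring)
    have hcont : Continuous (fun u => c * (Real.exp (-(a*u)) * (1 - a*u))) := by
      fun_prop
    have hFTC : ∫ u in (0:ℝ)..T, c * (Real.exp (-(a*u)) * (1 - a*u))
        = c * (T * Real.exp (-(a*T))) := by
      rw [intervalIntegral.integral_eq_sub_of_hasDerivAt hderiv
        (hcont.intervalIntegrable _ _)]
      simp
    rw [← MeasureTheory.integral_Ioc_eq_integral_Ioo,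
      ← intervalIntegral.integral_of_le hT.le, hFTC]
    rw [Ffun, if_pos (Set.mem_Ioo.mpr ⟨hs0, hs1⟩)]
    have habs : |Real.log s| = T := by
      rw [abs_of_neg (Real.log_neg hs0 hs1)]
    have hpow : s ^ (γ^2/2) = Real.exp (-(a*T)) := by
      rw [Real.rpow_def_of_pos hs0]
      congr 1
      simp only [hTdef, hadef]
      ring
    rw [habs, hpow]
    ring
  · have h0 : ∀ t ∈ Set.Ioi (0:ℝ), vker γ t * Jfun (Real.exp (-t)) s = 0 := by
      intro t ht
      have ht0 : (0:ℝ) < t := ht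
      have : Jfun (Real.exp (-t)) s = 0 := by
        rw [Jfun, if_neg]
        rintro ⟨hs1, hs2⟩
        have hexp : Real.exp (-t) < 1 := by
          have := Real.exp_lt_exp.mpr (show -t < 0 by linarith)
          simpa using this
        exact hs ⟨hs1, hs2.trans hexp⟩
      rw [this, mul_zero]
    rw [setIntegral_congr_fun measurableSet_Ioi h0, integral_zero, Ffun, if_neg hs]

/-- A priori bound for `(𝔐_A(𝒥_r), f)`. -/
lemma Mint_Jfun_abs_le (D A : Set ℂ) (f : ℂ → ℝ) (r : ℝ)
    (hfi : IntegrableOn (fun z => |f z|) (D \ A)) :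
    |Mint D A (Jfun r) f| ≤ Real.sqrt |Real.log r| * ∫ z in D \ A, |f z| := by
  rw [Mint]
  have h1 : |∫ z in D \ A, f z * Jfun r (Metric.infDist z A)|
      ≤ ∫ z in D \ A, |f z| * |Jfun r (Metric.infDist z A)| := by
    simpa [Real.norm_eq_abs, abs_mul] using MeasureTheory.norm_integral_le_integral_norm
      (μ := volume.restrict (D \ A)) (fun z => f z * Jfun r (Metric.infDist z A))
  refine h1.trans ?_
  rw [show Real.sqrt |Real.log r| * ∫ z in D \ A, |f z|
      = ∫ z in D \ A, |f z| * Real.sqrt |Real.log r| by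
    rw [MeasureTheory.integral_mul_const]; ring]
  refine integral_mono_of_nonneg (ae_of_all _ fun z => by positivity)
    (hfi.mul_const _) (ae_of_all _ fun z => ?_)
  dsimp only
  exact mul_le_mul_of_nonneg_left (Jfun_abs_le _ _) (abs_nonneg _)

/-- Fubini step: `(𝔐_A(F_γ), f) = ∫₀^∞ v_γ(t)·(𝔐_A(𝒥_{e^{-t}}), f) dt`, plus integrability. -/
lemma keyB (D A : Set ℂ) (hD : IsOpen D) (hA : IsClosed A)
    (f : ℂ → ℝ) (hf : Continuous f) (hfc : HasCompactSupport f)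
    {γ : ℝ} (hγ : 0 < γ) :
    Mint D A (Ffun γ) f
        = (∫ t in Set.Ioi (0:ℝ), vker γ t * Mint D A (Jfun (Real.exp (-t))) f)
    ∧ IntegrableOn (fun t => vker γ t * Mint D A (Jfun (Real.exp (-t))) f)
        (Set.Ioi (0:ℝ)) := by
  have ha : 0 < γ^2/2 := by positivity
  have hmes : MeasurableSet (D \ A) := hD.measurableSet.diff hA.measurableSet
  set μ := volume.restrict (D \ A) with hμ
  set ν := volume.restrict (Set.Ioi (0:ℝ)) with hν
  set c := γ / Real.sqrt (2*Real.pi) with hcdef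
  set K : ℂ × ℝ → ℝ :=
    fun p => f p.1 * (vker γ p.2 * Jfun (Real.exp (-p.2)) (Metric.infDist p.1 A))
    with hKdef
  have hcont_inf : Continuous fun z : ℂ => Metric.infDist z A :=
    Metric.continuous_infDist_pt A
  have hJm : Measurable fun p : ℂ × ℝ => Jfun (Real.exp (-p.2)) (Metric.infDist p.1 A) := by
    unfold Jfun
    refine Measurable.ite ?_
      ((Real.continuous_sqrt.measurable).comp
        ((Real.measurable_log.comp
          ((Real.continuous_exp.comp continuous_snd.neg).measurable)).abs))
      measurable_const
    have h1 : MeasurableSet {p : ℂ × ℝ | 0 < Metric.infDist p.1 A} :=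
      measurableSet_lt measurable_const ((hcont_inf.comp continuous_fst).measurable)
    have h2 : MeasurableSet {p : ℂ × ℝ | Metric.infDist p.1 A < Real.exp (-p.2)} :=
      measurableSet_lt ((hcont_inf.comp continuous_fst).measurable)
        ((Real.continuous_exp.comp continuous_snd.neg).measurable)
    have : {p : ℂ × ℝ | Metric.infDist p.1 A ∈ Set.Ioo 0 (Real.exp (-p.2))}
        = {p : ℂ × ℝ | 0 < Metric.infDist p.1 A}
          ∩ {p : ℂ × ℝ | Metric.infDist p.1 A < Real.exp (-p.2)} := by
      ext p; simp [Set.mem_Ioo, Set.mem_setOf_eq, Set.mem_inter_iff]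
    rw [this]
    exact h1.inter h2
  have hKm : AEStronglyMeasurable K (μ.prod ν) :=
    ((hf.measurable.comp measurable_fst).mul
      (((vker_measurable γ).comp measurable_snd).mul hJm)).aestronglyMeasurable
  set g : ℝ → ℝ := fun t => c * Real.exp (-(γ^2/2 * t))
    + c * (γ^2/2) * (t * Real.exp (-(γ^2/2 * t))) with hgdef
  have i0 : IntegrableOn (fun t : ℝ => Real.exp (-(γ^2/2 * t))) (Set.Ioi 0) :=
    (integrableOn_rpow_exp (by norm_num : (-1:ℝ) < 0) ha).congr_fun
      (fun t _ => by beta_reduce; rw [Real.rpow_zero, one_mul]) measurableSet_Ioi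
  have i1 : IntegrableOn (fun t : ℝ => t * Real.exp (-(γ^2/2 * t))) (Set.Ioi 0) :=
    (integrableOn_rpow_exp (by norm_num : (-1:ℝ) < 1) ha).congr_fun
      (fun t _ => by beta_reduce; rw [Real.rpow_one]) measurableSet_Ioi
  have hgint : IntegrableOn g (Set.Ioi 0) := (i0.const_mul c).add (i1.const_mul (c * (γ^2/2)))
  have hfint : Integrable (fun z => |f z|) μ :=
    ((hf.integrable_of_hasCompactSupport hfc).abs).integrableOn
  have hdom : Integrable (fun p : ℂ × ℝ => |f p.1| * g p.2) (μ.prod ν) :=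
    Integrable.mul_prod hfint hgint
  have hbound : ∀ᵐ p ∂(μ.prod ν), ‖K p‖ ≤ |f p.1| * g p.2 := by
    rw [hμ, hν, Measure.prod_restrict]
    filter_upwards [ae_restrict_mem (hmes.prod measurableSet_Ioi)] with p hp
    have hp2 : (0:ℝ) < p.2 := hp.2
    have hJb : |Jfun (Real.exp (-p.2)) (Metric.infDist p.1 A)| ≤ Real.sqrt p.2 := by
      have := Jfun_abs_le (Real.exp (-p.2)) (Metric.infDist p.1 A)
      rwa [Real.log_exp, abs_neg, abs_of_pos hp2] at this
    have hvJ : |vker γ p.2 * Jfun (Real.exp (-p.2)) (Metric.infDist p.1 A)| ≤ g p.2 := by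
      rw [abs_mul]
      calc |vker γ p.2| * |Jfun (Real.exp (-p.2)) (Metric.infDist p.1 A)|
          ≤ |vker γ p.2| * Real.sqrt p.2 :=
            mul_le_mul_of_nonneg_left hJb (abs_nonneg _)
        _ ≤ g p.2 := vker_abs_mul_sqrt_le hγ hp2
    simp only [Real.norm_eq_abs, hKdef]
    rw [abs_mul]
    exact mul_le_mul_of_nonneg_left hvJ (abs_nonneg _)
  have hKint : Integrable K (μ.prod ν) := Integrable.mono' hdom hKm hbound
  have hswap : (∫ z, ∫ t, K (z, t) ∂ν ∂μ) = ∫ t, ∫ z, K (z, t) ∂μ ∂ν :=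
    MeasureTheory.integral_integral_swap hKint
  have hleft : Mint D A (Ffun γ) f = ∫ z, ∫ t, K (z, t) ∂ν ∂μ := by
    rw [Mint, hμ]
    refine setIntegral_congr_fun hmes (fun z _ => ?_)
    rw [← keyA hγ (Metric.infDist z A), hν, ← MeasureTheory.integral_const_mul]
  have hright : ∀ t : ℝ, (∫ z, K (z, t) ∂μ)
      = vker γ t * Mint D A (Jfun (Real.exp (-t))) f := by
    intro t
    rw [Mint, hμ, ← MeasureTheory.integral_const_mul]
    refine integral_congr_ae (ae_of_all _ fun z => ?_)
    simp only [hKdef]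
    ring
  constructor
  · rw [hleft, hswap]
    exact integral_congr_ae (ae_of_all _ fun t => hright t)
  · have := hKint.integral_prod_right
    refine this.congr (ae_of_all _ fun t => ?_)
    exact hright t

/-- Tail bound for small `γ`. -/
lemma vker_tail {γ T : ℝ} (hγ : 0 < γ) (hγ1 : γ ≤ 1) (hT : 1 ≤ T) :
    ∫ t in Set.Ioc (0:ℝ) T, |vker γ t| ≤ γ * ((1 + T) * (2 * Real.sqrt T)) := by
  have hT0 : (0:ℝ) < T := by linarith
  have hint : IntegrableOn (fun t : ℝ => t ^ (-(1:ℝ)/2)) (Set.Ioc (0:ℝ) T) := by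
    have h := intervalIntegral.intervalIntegrable_rpow'
      (a := 0) (b := T) (by norm_num : (-1:ℝ) < -(1:ℝ)/2)
    exact (intervalIntegrable_iff_integrableOn_Ioc_of_le hT0.le).mp h
  have hsq : Real.sqrt (2 * Real.pi) ≥ 1 := by
    rw [show (1:ℝ) = Real.sqrt 1 by simp]
    exact Real.sqrt_le_sqrt (by nlinarith [Real.pi_gt_three])
  have hb : ∀ t ∈ Set.Ioc (0:ℝ) T,
      |vker γ t| ≤ (γ * (1 + T)) * t ^ (-(1:ℝ)/2) := by
    intro t ht
    obtain ⟨ht0, htT⟩ := ht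
    have hst : 0 < Real.sqrt t := Real.sqrt_pos.mpr ht0
    have h2 : t ^ (-(1:ℝ)/2) = (Real.sqrt t)⁻¹ := by
      rw [show (-(1:ℝ)/2) = -((1:ℝ)/2) by norm_num, Real.rpow_neg ht0.le,
        ← Real.sqrt_eq_rpow]
    have key : |vker γ t| * Real.sqrt t ≤ γ * (1 + T) := by
      have h1 : |vker γ t| * Real.sqrt t = |vker γ t * Real.sqrt t| := by
        rw [abs_mul, abs_of_nonneg (Real.sqrt_nonneg t)]
      rw [h1, vker_mul_sqrt ht0]
      have hc0 : 0 ≤ γ / Real.sqrt (2*Real.pi) := by positivity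
      have hcγ : γ / Real.sqrt (2*Real.pi) ≤ γ := by
        rw [div_le_iff₀ (by linarith : (0:ℝ) < Real.sqrt (2*Real.pi))]
        nlinarith
      have he1 : Real.exp (-(γ ^ 2 / 2 * t)) ≤ 1 := by
        rw [show (1:ℝ) = Real.exp 0 by simp]
        exact Real.exp_le_exp.mpr (by nlinarith)
      have habs1 : |1 - γ ^ 2 / 2 * t| ≤ 1 + T := by
        have h0 : 0 ≤ γ^2/2 * t := by positivity
        have hg2 : γ^2 ≤ 1 := by nlinarith
        have h1' : γ^2/2 * t ≤ T := by nlinarith [mul_le_mul_of_nonneg_right hg2 ht0.le]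
        rw [abs_le]; constructor <;> nlinarith
      calc |γ / Real.sqrt (2*Real.pi) * (Real.exp (-(γ ^ 2 / 2 * t)) * (1 - γ ^ 2 / 2 * t))|
          = γ / Real.sqrt (2*Real.pi) * (Real.exp (-(γ ^ 2 / 2 * t)) * |1 - γ ^ 2 / 2 * t|) := by
            rw [abs_mul, abs_mul, abs_of_nonneg hc0, abs_of_nonneg (Real.exp_pos _).le]
        _ ≤ γ * (1 * (1 + T)) := by
            refine mul_le_mul hcγ ?_ (by positivity) hγ.le
            exact mul_le_mul he1 habs1 (abs_nonneg _) (by norm_num)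
        _ = γ * (1 + T) := by ring
    rw [h2]
    calc |vker γ t| = |vker γ t| * Real.sqrt t * (Real.sqrt t)⁻¹ := by
          field_simp
      _ ≤ (γ * (1 + T)) * (Real.sqrt t)⁻¹ :=
          mul_le_mul_of_nonneg_right key (by positivity)
  have hval : ∫ t in Set.Ioc (0:ℝ) T, t ^ (-(1:ℝ)/2) = 2 * Real.sqrt T := by
    rw [← intervalIntegral.integral_of_le hT0.le,
      integral_rpow (Or.inl (by norm_num : (-1:ℝ) < -(1:ℝ)/2))]
    rw [show (-(1:ℝ)/2 + 1) = (1:ℝ)/2 by norm_num, Real.zero_rpow (by norm_num),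
      ← Real.sqrt_eq_rpow]
    ring
  have habsint : IntegrableOn (fun t => |vker γ t|) (Set.Ioc (0:ℝ) T) :=
    ((vker_integrableOn hγ).mono_set Set.Ioc_subset_Ioi_self).abs
  calc ∫ t in Set.Ioc (0:ℝ) T, |vker γ t|
      ≤ ∫ t in Set.Ioc (0:ℝ) T, (γ * (1 + T)) * t ^ (-(1:ℝ)/2) :=
        setIntegral_mono_on habsint (hint.const_mul _) measurableSet_Ioc hb
    _ = (γ * (1 + T)) * (2 * Real.sqrt T) := by
        rw [MeasureTheory.integral_const_mul, hval]
    _ = γ * ((1 + T) * (2 * Real.sqrt T)) := by ring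

/-- If both limits `L₁ = lim_{γ→0⁺} (𝔐_A(F_γ), f)` and `L₂ = lim_{r→0⁺} (𝔐_A(𝒥_r), f)` exist,
then `L₁ = (1/2)·L₂`. -/
theorem stmt1 (D A : Set ℂ) (hD : IsOpen D) (hDb : Bornology.IsBounded D)
    (hA : IsClosed A) (hAne : A.Nonempty) (hAD : A ⊆ closure D)
    (f : ℂ → ℝ) (hf : Continuous f) (hfc : HasCompactSupport f) (hfD : tsupport f ⊆ D)
    (L₁ L₂ : ℝ)
    (h₁ : Tendsto (fun γ => Mint D A (Ffun γ) f) (nhdsWithin 0 (Set.Ioi 0)) (nhds L₁))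
    (h₂ : Tendsto (fun r => Mint D A (Jfun r) f) (nhdsWithin 0 (Set.Ioi 0)) (nhds L₂)) :
    L₁ = (1 / 2) * L₂ := by
  set Φ : ℝ → ℝ := fun t => Mint D A (Jfun (Real.exp (-t))) f with hΦdef
  set C : ℝ := ∫ z in D \ A, |f z| with hCdef
  have hfi : IntegrableOn (fun z => |f z|) (D \ A) :=
    ((hf.integrable_of_hasCompactSupport hfc).abs).integrableOn
  have hC0 : 0 ≤ C := integral_nonneg (fun z => abs_nonneg _)
  -- Φ bound : |Φ t| ≤ √t * C for t > 0
  have hΦb : ∀ t : ℝ, 0 < t → |Φ t| ≤ Real.sqrt t * C := by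
    intro t ht
    have := Mint_Jfun_abs_le D A f (Real.exp (-t)) hfi
    rwa [Real.log_exp, abs_neg, abs_of_pos ht] at this
  -- Φ tends to L₂ at infinity
  have hΦlim : Tendsto Φ atTop (nhds L₂) := by
    refine h₂.comp ?_
    rw [tendsto_nhdsWithin_iff]
    constructor
    · exact Real.tendsto_exp_atBot.comp Filter.tendsto_neg_atTop_atBot
    · exact Filter.Eventually.of_forall (fun t => Real.exp_pos _)
  -- the main limit
  have hmain : Tendsto (fun γ => Mint D A (Ffun γ) f)
      (nhdsWithin 0 (Set.Ioi 0)) (nhds ((1/2) * L₂)) := by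
    rw [Metric.tendsto_nhdsWithin_nhds]
    intro ε hε
    obtain ⟨T₀, hT₀⟩ := Metric.tendsto_atTop.mp hΦlim (ε/4) (by linarith)
    set T : ℝ := max T₀ 1 with hTdef
    have hT1 : (1:ℝ) ≤ T := le_max_right _ _
    have hT0 : (0:ℝ) < T := by linarith
    set M : ℝ := Real.sqrt T * C + |L₂| with hMdef
    have hM0 : 0 ≤ M := by positivity
    set B : ℝ := (1 + T) * (2 * Real.sqrt T) with hBdef
    have hB0 : 0 < B := by positivity
    refine ⟨min 1 (ε / (2 * (M + 1) * B)), lt_min (by norm_num) (by positivity), ?_⟩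
    intro γ hγ hγd
    have hγ0 : 0 < γ := hγ
    rw [Real.dist_eq, sub_zero, abs_of_pos hγ0] at hγd
    have hγ1 : γ ≤ 1 := le_of_lt (lt_of_lt_of_le hγd (min_le_left _ _))
    have hγε : γ < ε / (2 * (M + 1) * B) := lt_of_lt_of_le hγd (min_le_right _ _)
    obtain ⟨hBeq, hBint⟩ := keyB D A hD hA f hf hfc hγ0
    -- integrability of pieces
    have hvint : IntegrableOn (vker γ) (Set.Ioi 0) := vker_integrableOn hγ0
    have hdiffint : IntegrableOn (fun t => vker γ t * (Φ t - L₂)) (Set.Ioi 0) := by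
      have h' : IntegrableOn (fun t => vker γ t * Φ t - vker γ t * L₂) (Set.Ioi 0) :=
        hBint.sub (hvint.mul_const L₂)
      exact IntegrableOn.congr_fun h' (fun t _ => by ring) measurableSet_Ioi
    -- main difference identity
    have hdiff : Mint D A (Ffun γ) f - (1/2) * L₂
        = ∫ t in Set.Ioi (0:ℝ), vker γ t * (Φ t - L₂) := by
      have h1 : ∫ t in Set.Ioi (0:ℝ), vker γ t * (Φ t - L₂)
          = (∫ t in Set.Ioi (0:ℝ), vker γ t * Φ t)
            - ∫ t in Set.Ioi (0:ℝ), vker γ t * L₂ := by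
        rw [← integral_sub hBint (hvint.mul_const L₂)]
        refine integral_congr_ae (ae_of_all _ fun t => ?_)
        ring
      rw [h1, MeasureTheory.integral_mul_const, vker_integral hγ0, hBeq]
      try ring
    -- estimate
    have hsplit : Set.Ioc (0:ℝ) T ∪ Set.Ioi T = Set.Ioi (0:ℝ) :=
      Set.Ioc_union_Ioi_eq_Ioi hT0.le
    have habs_int : IntegrableOn (fun t => |vker γ t| * |Φ t - L₂|) (Set.Ioi 0) := by
      have h' : IntegrableOn (fun t => |vker γ t * (Φ t - L₂)|) (Set.Ioi 0) := hdiffint.abs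
      refine IntegrableOn.congr_fun h' (fun t _ => ?_) measurableSet_Ioi
      rw [abs_mul]
    have hbound1 : ∫ t in Set.Ioc (0:ℝ) T, |vker γ t| * |Φ t - L₂|
        ≤ M * (γ * B) := by
      have hptwise : ∀ t ∈ Set.Ioc (0:ℝ) T, |vker γ t| * |Φ t - L₂| ≤ |vker γ t| * M := by
        intro t ht
        refine mul_le_mul_of_nonneg_left ?_ (abs_nonneg _)
        calc |Φ t - L₂| ≤ |Φ t| + |L₂| := abs_sub _ _
          _ ≤ Real.sqrt t * C + |L₂| := by
              have := hΦb t ht.1; linarith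
          _ ≤ M := by
              have : Real.sqrt t ≤ Real.sqrt T := Real.sqrt_le_sqrt ht.2
              simp only [hMdef]
              nlinarith
      have htail := vker_tail hγ0 hγ1 hT1
      calc ∫ t in Set.Ioc (0:ℝ) T, |vker γ t| * |Φ t - L₂|
          ≤ ∫ t in Set.Ioc (0:ℝ) T, |vker γ t| * M := by
            refine setIntegral_mono_on
              (habs_int.mono_set Set.Ioc_subset_Ioi_self)
              (((hvint.mono_set Set.Ioc_subset_Ioi_self).abs).mul_const M)
              measurableSet_Ioc hptwise
        _ = (∫ t in Set.Ioc (0:ℝ) T, |vker γ t|) * M := by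
            rw [MeasureTheory.integral_mul_const]
        _ ≤ (γ * B) * M := by
            refine mul_le_mul_of_nonneg_right ?_ hM0
            simpa [hBdef] using htail
        _ = M * (γ * B) := by ring
    have hbound2 : ∫ t in Set.Ioi T, |vker γ t| * |Φ t - L₂| ≤ (3/2) * (ε/4) := by
      have hptwise : ∀ t ∈ Set.Ioi T, |vker γ t| * |Φ t - L₂| ≤ |vker γ t| * (ε/4) := by
        intro t ht
        refine mul_le_mul_of_nonneg_left ?_ (abs_nonneg _)
        have := hT₀ t (le_trans (le_max_left _ _) (le_of_lt ht))
        rw [Real.dist_eq] at this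
        exact this.le
      calc ∫ t in Set.Ioi T, |vker γ t| * |Φ t - L₂|
          ≤ ∫ t in Set.Ioi T, |vker γ t| * (ε/4) := by
            refine setIntegral_mono_on
              (habs_int.mono_set (Set.Ioi_subset_Ioi hT0.le))
              (((hvint.mono_set (Set.Ioi_subset_Ioi hT0.le)).abs).mul_const _)
              measurableSet_Ioi hptwise
        _ = (∫ t in Set.Ioi T, |vker γ t|) * (ε/4) := by
            rw [MeasureTheory.integral_mul_const]
        _ ≤ (3/2) * (ε/4) := by
            refine mul_le_mul_of_nonneg_right ?_ (by linarith)
            refine le_trans ?_ (vker_abs_integral hγ0)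
            refine setIntegral_mono_set hvint.abs
              (ae_of_all _ fun t => abs_nonneg _)
              (HasSubset.Subset.eventuallyLE (Set.Ioi_subset_Ioi hT0.le))
    have htotal : |Mint D A (Ffun γ) f - (1/2) * L₂| ≤ M * (γ * B) + (3/2) * (ε/4) := by
      rw [hdiff]
      calc |∫ t in Set.Ioi (0:ℝ), vker γ t * (Φ t - L₂)|
          ≤ ∫ t in Set.Ioi (0:ℝ), |vker γ t| * |Φ t - L₂| := by
            simpa [Real.norm_eq_abs, abs_mul] using MeasureTheory.norm_integral_le_integral_norm
              (μ := volume.restrict (Set.Ioi (0:ℝ))) (fun t => vker γ t * (Φ t - L₂))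
        _ = (∫ t in Set.Ioc (0:ℝ) T, |vker γ t| * |Φ t - L₂|)
            + ∫ t in Set.Ioi T, |vker γ t| * |Φ t - L₂| := by
            rw [← hsplit, setIntegral_union (Set.Ioc_disjoint_Ioi le_rfl)
              measurableSet_Ioi
              ((habs_int.mono_set (hsplit ▸ Set.subset_union_left)))
              ((habs_int.mono_set (hsplit ▸ Set.subset_union_right)))]
        _ ≤ M * (γ * B) + (3/2) * (ε/4) := add_le_add hbound1 hbound2
    have hMγB : M * (γ * B) ≤ ε / 2 := by
      have h1 : γ * (2 * (M + 1) * B) ≤ ε := by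
        rw [← le_div_iff₀ (by positivity : (0:ℝ) < 2 * (M + 1) * B)] at *
        exact hγε.le
      nlinarith
    rw [Real.dist_eq]
    calc |Mint D A (Ffun γ) f - (1/2) * L₂| ≤ M * (γ * B) + (3/2) * (ε/4) := htotal
      _ ≤ ε/2 + (3/2) * (ε/4) := by linarith
      _ < ε := by linarith
  exact tendsto_nhds_unique h₁ hmain
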